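/- There exists an SCM in M_no-cf satisfying the observational fairness notion (A ⟂ S | D) but not the interventional fairness notion: take U_S = 0, U_D = 0, U_A ~ Ber(ε) with ε ∈ [0, 1/2), and S = 0, D = 0, A = S ⊕ U_A. Then A ⟂ S | D holds, yet P(A=1 | do(S=1), do(D=d)) = 1−ε ≠ ε = P(A=1 | do(D=d)) for all d. -/

import Mathlib

open MeasureTheory ProbabilityTheory
open scoped ENNReal

/-- There exists an SCM in the no-confounding model class satisfying the
observational fairness notion (`A ⟂ S | D`) but not the interventional one:
take `S = 0`, `D = 0`, `A = S ⊕ U_A` with `U_A ~ Ber(ε)`, `ε ∈ [0, 1/2)`;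
then `P(A=1 | do(S=1), do(D=d)) = 1−ε ≠ ε = P(A=1 | do(D=d))`. -/
theorem stmt10 : ∀ ε : ℝ≥0∞, ε < 1/2 →
    ∃ (Ω : Type) (_ : MeasurableSpace Ω)
      (μ : Measure Ω) (_ : IsProbabilityMeasure μ)
      (S D UA : Ω → Bool) (fA : Bool → Bool → Bool → Bool) (A : Ω → Bool),
      μ {ω | UA ω = true} = ε ∧
      (∀ ω, S ω = false) ∧ (∀ ω, D ω = false) ∧
      (fA = fun s _ u => xor s u) ∧
      (∀ ω, A ω = fA (S ω) (D ω) (UA ω)) ∧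
      (∀ (a s d : Bool),
        μ {ω | A ω = a ∧ S ω = s ∧ D ω = d} * μ {ω | D ω = d}
          = μ {ω | A ω = a ∧ D ω = d} * μ {ω | S ω = s ∧ D ω = d}) ∧
      (∀ d : Bool,
        μ {ω | fA true d (UA ω) = true} = 1 - ε ∧
        μ {ω | fA (S ω) d (UA ω) = true} = ε) ∧
      (1 - ε ≠ ε) := by
  intro ε hε
  have hε1 : ε ≤ 1 := le_trans hε.le (by norm_num)
  set p : PMF Bool := PMF.bernoulli ε.toNNReal (by rw [← ENNReal.coe_le_coe, ENNReal.coe_toNNReal (ne_top_of_lt hε)]; simpa using hε1) with hp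
  have htrue : p.toMeasure {true} = ε := by
    rw [p.toMeasure_apply_singleton _ (measurableSet_singleton _)]
    simp [hp, PMF.bernoulli, ENNReal.coe_toNNReal (ne_top_of_lt hε)]
  have hfalse : p.toMeasure {false} = 1 - ε := by
    rw [p.toMeasure_apply_singleton _ (measurableSet_singleton _)]
    simp [hp, PMF.bernoulli, ENNReal.coe_toNNReal (ne_top_of_lt hε)]
  refine ⟨Bool, inferInstance, p.toMeasure, inferInstance,
    (fun _ => false), (fun _ => false), id, (fun s _ u => xor s u), id,
    ?_, fun _ => rfl, fun _ => rfl, rfl, ?_, ?_, ?_, ?_⟩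
  · simpa using htrue
  · intro ω; simp
  · intro a s d
    cases s <;> cases d <;> simp only [Set.setOf_and]
    · have : {ω : Bool | (false : Bool) = false} = Set.univ := by ext; simp
      simp [this, measure_univ, mul_comm]
    all_goals
      simp only [show {ω : Bool | (false : Bool) = true} = (∅ : Set Bool) from by ext; simp]
      simp [Set.inter_empty, Set.empty_inter]
  · intro d
    constructor
    · have h1 : {ω : Bool | xor true (id ω) = true} = {false} := by ext b; cases b <;> simp
      rw [h1]; exact hfalse
    · have h2 : {ω : Bool | xor false (id ω) = true} = {true} := by ext b; cases b <;> simp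
      rw [h2]; exact htrue
  · intro h
    have h2 : (1:ℝ≥0∞) - ε ≥ 1/2 := by
      have := tsub_le_tsub_left hε.le (1:ℝ≥0∞)
      calc (1:ℝ≥0∞)/2 = 1 - 1/2 := by norm_num [ENNReal.sub_eq_of_eq_add]
        _ ≤ 1 - ε := by exact tsub_le_tsub_left hε.le 1
    exact absurd (h ▸ h2) (not_le.mpr hε)
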